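/- Let d ≥ 1, ε ∈ ℝ, U : ℝ^d → ℝ, and let ρ, Ŝ : ℝ × ℝ^d → ℝ with ρ(t,x) > 0 everywhere, both ρ and Ŝ continuously differentiable in t and twice continuously differentiable in x. Suppose that at every (t,x): (i) ∂_t ρ = −∇·(ρ ∇Ŝ) (continuity equation), and (ii) ∂_t Ŝ = −½‖∇Ŝ‖² − ½ε²‖∇(log ∘ ρ)‖² − ε² Δ(log ∘ ρ) + U. Then S := Ŝ + ε·log ρ satisfies, at every (t,x), both ∂_t ρ = −∇·(ρ ∇S) + ε Δρ and ∂_t S = −½‖∇S‖² − ε ΔS + U. -/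

import Mathlib

open MeasureTheory
open scoped RealInnerProductSpace BigOperators

/-- Gradient of a scalar function on Euclidean space. -/
noncomputable def egrad {d : ℕ} (f : EuclideanSpace ℝ (Fin d) → ℝ)
    (x : EuclideanSpace ℝ (Fin d)) : EuclideanSpace ℝ (Fin d) :=
  gradient f x

/-- Laplacian `Δf = ∑ i, ∂²f/∂x_i²`. -/
noncomputable def elap {d : ℕ} (f : EuclideanSpace ℝ (Fin d) → ℝ)
    (x : EuclideanSpace ℝ (Fin d)) : ℝ :=
  ∑ i, fderiv ℝ (fun y => fderiv ℝ f y (EuclideanSpace.single i (1 : ℝ))) x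
      (EuclideanSpace.single i (1 : ℝ))

/-- Divergence `∇·V = ∑ i, ∂V_i/∂x_i` of a vector field. -/
noncomputable def ediv {d : ℕ} (V : EuclideanSpace ℝ (Fin d) → EuclideanSpace ℝ (Fin d))
    (x : EuclideanSpace ℝ (Fin d)) : ℝ :=
  ∑ i, fderiv ℝ (fun y => V y i) x (EuclideanSpace.single i (1 : ℝ))

open InnerProductSpace

section Aux
variable {d : ℕ}

lemma egrad_coord (f : EuclideanSpace ℝ (Fin d) → ℝ) (x : EuclideanSpace ℝ (Fin d)) (i : Fin d) :
    egrad f x i = fderiv ℝ f x (EuclideanSpace.single i 1) := by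
  have h : ⟪egrad f x, EuclideanSpace.single i (1:ℝ)⟫_ℝ
      = fderiv ℝ f x (EuclideanSpace.single i 1) := by
    simp [egrad, gradient, InnerProductSpace.toDual_symm_apply]
  simpa [EuclideanSpace.inner_single_right] using h

lemma fderiv_add_const_mul (f g : EuclideanSpace ℝ (Fin d) → ℝ) (c : ℝ) (x)
    (hf : DifferentiableAt ℝ f x) (hg : DifferentiableAt ℝ g x) :
    fderiv ℝ (fun z => f z + c * g z) x = fderiv ℝ f x + c • fderiv ℝ g x := by
  rw [fderiv_fun_add hf (hg.const_mul c), fderiv_const_mul hg]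

lemma egrad_add_const_mul (f g : EuclideanSpace ℝ (Fin d) → ℝ) (c : ℝ) (x)
    (hf : DifferentiableAt ℝ f x) (hg : DifferentiableAt ℝ g x) :
    egrad (fun z => f z + c * g z) x = egrad f x + c • egrad g x := by
  simp [egrad, gradient, fderiv_add_const_mul f g c x hf hg]

lemma egrad_log (g : EuclideanSpace ℝ (Fin d) → ℝ) (x)
    (hg : DifferentiableAt ℝ g x) (h0 : g x ≠ 0) :
    egrad (fun z => Real.log (g z)) x = (g x)⁻¹ • egrad g x := by
  have h := (hg.hasFDerivAt.log h0).fderiv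
  simp [egrad, gradient, h]

lemma diffAt_fderiv_apply {f : EuclideanSpace ℝ (Fin d) → ℝ} {x}
    (hf : ContDiffAt ℝ 2 f x) (v : EuclideanSpace ℝ (Fin d)) :
    DifferentiableAt ℝ (fun y => fderiv ℝ f y v) x :=
  ((hf.fderiv_right (m := 1) (le_refl 2)).clm_apply contDiffAt_const).differentiableAt one_ne_zero

lemma elap_add_const_mul (f g : EuclideanSpace ℝ (Fin d) → ℝ) (c : ℝ) (x)
    (hf : ContDiffAt ℝ 2 f x) (hg : ContDiffAt ℝ 2 g x)
    (hfd : Differentiable ℝ f) (hgd : Differentiable ℝ g) :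
    elap (fun z => f z + c * g z) x = elap f x + c * elap g x := by
  unfold elap
  rw [Finset.mul_sum, ← Finset.sum_add_distrib]
  refine Finset.sum_congr rfl fun i _ => ?_
  have hcongr : (fun y => fderiv ℝ (fun z => f z + c * g z) y (EuclideanSpace.single i (1:ℝ)))
      = fun y => fderiv ℝ f y (EuclideanSpace.single i 1) +
          c * fderiv ℝ g y (EuclideanSpace.single i 1) := by
    funext y
    rw [fderiv_add_const_mul f g c y (hfd y) (hgd y)]
    simp
  rw [hcongr, fderiv_fun_add (diffAt_fderiv_apply hf _) ((diffAt_fderiv_apply hg _).const_mul c),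
    fderiv_const_mul (diffAt_fderiv_apply hg _)]
  simp

lemma smul_grad_coord (g f : EuclideanSpace ℝ (Fin d) → ℝ) (i : Fin d) :
    (fun y => (g y • egrad f y) i)
      = fun y => g y * fderiv ℝ f y (EuclideanSpace.single i 1) :=
  funext fun y => by simp [egrad_coord]

lemma ediv_smul_grad (f g : EuclideanSpace ℝ (Fin d) → ℝ) (x)
    (hf : ContDiff ℝ 2 f) (hg : ContDiff ℝ 2 g) :
    ediv (fun y => g y • egrad f y) x
      = ⟪egrad g x, egrad f x⟫_ℝ + g x * elap f x := by
  unfold ediv elap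
  have hinner : ⟪egrad g x, egrad f x⟫_ℝ
      = ∑ i, fderiv ℝ g x (EuclideanSpace.single i 1) * fderiv ℝ f x (EuclideanSpace.single i 1) := by
    simp [PiLp.inner_apply, egrad_coord]
    exact Finset.sum_congr rfl fun _ _ => mul_comm _ _
  rw [hinner, Finset.mul_sum, ← Finset.sum_add_distrib]
  refine Finset.sum_congr rfl fun i _ => ?_
  rw [smul_grad_coord, fderiv_fun_mul (hg.differentiable two_ne_zero x) (diffAt_fderiv_apply hf.contDiffAt _)]
  simp [mul_comm]
  ring

lemma ediv_key (f g : EuclideanSpace ℝ (Fin d) → ℝ) (c : ℝ) (x)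
    (hf : ContDiff ℝ 2 f) (hg : ContDiff ℝ 2 g) (hpos : ∀ y, 0 < g y) :
    ediv (fun y => g y • egrad (fun z => f z + c * Real.log (g z)) y) x
      = ediv (fun y => g y • egrad f y) x + c * elap g x := by
  have hVeq : (fun y => g y • egrad (fun z => f z + c * Real.log (g z)) y)
      = fun y => g y • egrad f y + c • egrad g y := by
    funext y
    have hgd := hg.differentiable two_ne_zero y
    have hL : DifferentiableAt ℝ (fun z => Real.log (g z)) y :=
      (hgd.hasFDerivAt.log (hpos y).ne').differentiableAt
    rw [egrad_add_const_mul f _ c y (hf.differentiable two_ne_zero y) hL,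
        egrad_log g y hgd (hpos y).ne', smul_add, smul_smul, smul_smul,
        show g y * c * (g y)⁻¹ = c by rw [mul_comm (g y) c, mul_assoc, mul_inv_cancel₀ (hpos y).ne', mul_one]]
  rw [hVeq]
  unfold ediv elap
  rw [Finset.mul_sum, ← Finset.sum_add_distrib]
  refine Finset.sum_congr rfl fun i _ => ?_
  have hco : (fun y => (g y • egrad f y + c • egrad g y) i)
      = fun y => g y * fderiv ℝ f y (EuclideanSpace.single i 1)
          + c * fderiv ℝ g y (EuclideanSpace.single i 1) :=
    funext fun y => by simp [egrad_coord]
  rw [hco, smul_grad_coord,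
    fderiv_fun_add ((hg.differentiable two_ne_zero x).fun_mul (diffAt_fderiv_apply hf.contDiffAt _))
      ((diffAt_fderiv_apply hg.contDiffAt _).const_mul c),
    fderiv_const_mul (diffAt_fderiv_apply hg.contDiffAt _)]
  simp

end Aux

/-- inverse Hopf–Cole transformation.  If `ρ` solves the continuity
equation with drift `∇Ŝ` and `Ŝ` solves the transformed equation, then
`S = Ŝ + ε log ρ` solves the Fokker–Planck and Hamilton–Jacobi–Bellman equations. -/
theorem inverse_hopf_cole {d : ℕ} (hd : 1 ≤ d) (ε : ℝ)
    (U : EuclideanSpace ℝ (Fin d) → ℝ)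
    (ρ Shat : ℝ → EuclideanSpace ℝ (Fin d) → ℝ)
    (hpos : ∀ t x, 0 < ρ t x)
    (hρt : ∀ x, ContDiff ℝ 1 (fun t => ρ t x))
    (hρx : ∀ t, ContDiff ℝ 2 (ρ t))
    (hSt : ∀ x, ContDiff ℝ 1 (fun t => Shat t x))
    (hSx : ∀ t, ContDiff ℝ 2 (Shat t))
    (hCont : ∀ t x, deriv (fun s => ρ s x) t
      = -ediv (fun y => ρ t y • egrad (Shat t) y) x)
    (hEq : ∀ t x, deriv (fun s => Shat s x) t
      = -(1/2) * ‖egrad (Shat t) x‖ ^ 2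
        - (1/2) * ε ^ 2 * ‖egrad (fun z => Real.log (ρ t z)) x‖ ^ 2
        - ε ^ 2 * elap (fun z => Real.log (ρ t z)) x + U x) :
    ∀ t x,
      (deriv (fun s => ρ s x) t
        = -ediv (fun y => ρ t y • egrad (fun z => Shat t z + ε * Real.log (ρ t z)) y) x
          + ε * elap (ρ t) x) ∧
      (deriv (fun s => Shat s x + ε * Real.log (ρ s x)) t
        = -(1/2) * ‖egrad (fun z => Shat t z + ε * Real.log (ρ t z)) x‖ ^ 2
          - ε * elap (fun z => Shat t z + ε * Real.log (ρ t z)) x + U x) := by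
  intro t x
  have hgd : Differentiable ℝ (ρ t) := (hρx t).differentiable two_ne_zero
  have hfd : Differentiable ℝ (Shat t) := (hSx t).differentiable two_ne_zero
  have hLd : Differentiable ℝ (fun z => Real.log (ρ t z)) := fun y =>
    ((hgd y).hasFDerivAt.log (hpos t y).ne').differentiableAt
  have hL2 : ContDiffAt ℝ 2 (fun z => Real.log (ρ t z)) x :=
    ((hρx t).contDiffAt).log (hpos t x).ne'
  constructor
  · rw [hCont t x, ediv_key (Shat t) (ρ t) ε x (hSx t) (hρx t) (hpos t)]
    ring
  · -- time derivative of the sum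
    have hS : HasDerivAt (fun s => Shat s x) (deriv (fun s => Shat s x) t) t :=
      (((hSt x).differentiable one_ne_zero) t).hasDerivAt
    have hR : HasDerivAt (fun s => ρ s x) (deriv (fun s => ρ s x) t) t :=
      (((hρt x).differentiable one_ne_zero) t).hasDerivAt
    have hlog : HasDerivAt (fun s => Real.log (ρ s x))
        (deriv (fun s => ρ s x) t / ρ t x) t := hR.log (hpos t x).ne'
    have hLHS : deriv (fun s => Shat s x + ε * Real.log (ρ s x)) t
        = deriv (fun s => Shat s x) t + ε * (deriv (fun s => ρ s x) t / ρ t x) :=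
      (hS.add (hlog.const_mul ε)).deriv
    -- spatial rewrites
    have hgrad : egrad (fun z => Shat t z + ε * Real.log (ρ t z)) x
        = egrad (Shat t) x + ε • egrad (fun z => Real.log (ρ t z)) x :=
      egrad_add_const_mul _ _ ε x (hfd x) (hLd x)
    have hlap : elap (fun z => Shat t z + ε * Real.log (ρ t z)) x
        = elap (Shat t) x + ε * elap (fun z => Real.log (ρ t z)) x :=
      elap_add_const_mul _ _ ε x (hSx t).contDiffAt hL2 hfd hLd
    have hgL : egrad (fun z => Real.log (ρ t z)) x = (ρ t x)⁻¹ • egrad (ρ t) x :=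
      egrad_log (ρ t) x (hgd x) (hpos t x).ne'
    have hderρ : deriv (fun s => ρ s x) t
        = -(⟪egrad (ρ t) x, egrad (Shat t) x⟫_ℝ + ρ t x * elap (Shat t) x) := by
      rw [hCont t x, ediv_smul_grad (Shat t) (ρ t) x (hSx t) (hρx t)]
    -- norm expansion
    have hnorm : ‖egrad (fun z => Shat t z + ε * Real.log (ρ t z)) x‖ ^ 2
        = ‖egrad (Shat t) x‖ ^ 2
          + 2 * ε * ((ρ t x)⁻¹ * ⟪egrad (ρ t) x, egrad (Shat t) x⟫_ℝ)
          + ε ^ 2 * ‖egrad (fun z => Real.log (ρ t z)) x‖ ^ 2 := by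
      rw [hgrad, norm_add_sq_real]
      rw [show ⟪egrad (Shat t) x, ε • egrad (fun z => Real.log (ρ t z)) x⟫_ℝ
          = ε * ((ρ t x)⁻¹ * ⟪egrad (ρ t) x, egrad (Shat t) x⟫_ℝ) by
        rw [real_inner_smul_right, hgL, real_inner_smul_right, real_inner_comm]]
      rw [norm_smul]
      ring_nf
      simp [abs_sq]
    rw [hLHS, hEq t x, hderρ, hnorm, hlap]
    have h0 : ρ t x ≠ 0 := (hpos t x).ne'
    field_simp
    ring
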